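/- In the three-step connection procedure on a properly 3-colored rooted forest H — where (1) color-1 vertices connect to their parents and both endpoints become 'connected', (2) then unconnected color-2 vertices with unconnected parents connect to their parents, (3) then likewise for color 3, and (4) finally all still-unconnected vertices connect to their parents — every resulting component has depth at most 3. -/
import Mathlib


section
variable {V : Type*} (par : V → Option V) (col : V → Fin 3)

/-- Step 1: every vertex of color 1 (here color `0`) that has a parent chooses
its parent. -/
def S1 : Set V := {v | col v = 0 ∧ ∃ u, par v = some u}

/-- Vertices marked "connected" after step 1: the choosers and the chosen
parents. -/
def C1 : Set V := S1 par col ∪ {u | ∃ v ∈ S1 par col, par v = some u}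

/-- Step 2: every vertex of color 2 (here color `1`) that is not yet connected
and whose parent is not yet connected chooses its parent. -/
def S2 : Set V := {v | col v = 1 ∧ v ∉ C1 par col ∧ ∃ u, par v = some u ∧ u ∉ C1 par col}

/-- Vertices marked "connected" after step 2. -/
def C2 : Set V := C1 par col ∪ S2 par col ∪ {u | ∃ v ∈ S2 par col, par v = some u}

/-- Step 3: likewise for color 3 (here color `2`). -/
def S3 : Set V := {v | col v = 2 ∧ v ∉ C2 par col ∧ ∃ u, par v = some u ∧ u ∉ C2 par col}

/-- Vertices marked "connected" after step 3. -/
def C3 : Set V := C2 par col ∪ S3 par col ∪ {u | ∃ v ∈ S3 par col, par v = some u}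

/-- Step 4: every vertex still unconnected after steps 1–3 that has a parent
chooses its parent. -/
def S4 : Set V := {v | v ∉ C3 par col ∧ ∃ u, par v = some u}

/-- The edge from `v` to its parent `u` is chosen during steps 1–3. -/
def chosen13 (v u : V) : Prop :=
  par v = some u ∧ v ∈ S1 par col ∪ S2 par col ∪ S3 par col

/-- The edge from `v` to its parent `u` is chosen during the whole procedure
(steps 1–4). -/
def chosen (v u : V) : Prop :=
  par v = some u ∧ v ∈ S1 par col ∪ S2 par col ∪ S3 par col ∪ S4 par col

end

section
variable {V : Type*} {par : V → Option V} {col : V → Fin 3}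

lemma C1_subset_C2 : C1 par col ⊆ C2 par col := fun v h => Or.inl (Or.inl h)
lemma C2_subset_C3 : C2 par col ⊆ C3 par col := fun v h => Or.inl (Or.inl h)

lemma self_mem_C3 {v : V} (h : v ∈ S1 par col ∪ S2 par col ∪ S3 par col) :
    v ∈ C3 par col := by
  rcases h with (h | h) | h
  · exact C2_subset_C3 (C1_subset_C2 (Or.inl h))
  · exact C2_subset_C3 (Or.inl (Or.inr h))
  · exact Or.inl (Or.inr h)

lemma parent_mem_C3 {v u : V} (h : v ∈ S1 par col ∪ S2 par col ∪ S3 par col)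
    (hp : par v = some u) : u ∈ C3 par col := by
  rcases h with (h | h) | h
  · exact C2_subset_C3 (C1_subset_C2 (Or.inr ⟨v, h, hp⟩))
  · exact C2_subset_C3 (Or.inr ⟨v, h, hp⟩)
  · exact Or.inr ⟨v, h, hp⟩

lemma lemA {v u : V} (hp : par v = some u) (hv : v ∉ C3 par col)
    (hu : u ∉ C3 par col) : False := by
  have hv1 : v ∉ C1 par col := fun h => hv (C2_subset_C3 (C1_subset_C2 h))
  have hu1 : u ∉ C1 par col := fun h => hu (C2_subset_C3 (C1_subset_C2 h))
  have hv2 : v ∉ C2 par col := fun h => hv (C2_subset_C3 h)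
  have hu2 : u ∉ C2 par col := fun h => hu (C2_subset_C3 h)
  have hc : col v = 0 ∨ col v = 1 ∨ col v = 2 := by omega
  rcases hc with hc | hc | hc
  · exact hv (self_mem_C3 (Or.inl (Or.inl ⟨hc, u, hp⟩)))
  · exact hv (self_mem_C3 (Or.inl (Or.inr ⟨hc, hv1, u, hp, hu1⟩)))
  · exact hv (self_mem_C3 (Or.inr ⟨hc, hv2, u, hp, hu2⟩))

lemma lemB {v u : V} (hproper : ∀ v u, par v = some u → col v ≠ col u)
    (hv : v ∈ S1 par col ∪ S2 par col ∪ S3 par col) (hp : par v = some u)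
    (hu : u ∈ S1 par col ∪ S2 par col ∪ S3 par col) : False := by
  rcases hu with (hu | hu) | hu
  · have huc : u ∈ C1 par col := Or.inl hu
    rcases hv with (hv | hv) | hv
    · exact hproper v u hp (hv.1.trans hu.1.symm)
    · obtain ⟨_, _, w, hpw, hwnc⟩ := hv
      rw [hp] at hpw; obtain rfl := Option.some_inj.mp hpw
      exact hwnc huc
    · obtain ⟨_, _, w, hpw, hwnc⟩ := hv
      rw [hp] at hpw; obtain rfl := Option.some_inj.mp hpw
      exact hwnc (C1_subset_C2 huc)
  · rcases hv with (hv | hv) | hv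
    · exact hu.2.1 (Or.inr ⟨v, hv, hp⟩)
    · exact hproper v u hp (hv.1.trans hu.1.symm)
    · obtain ⟨_, _, w, hpw, hwnc⟩ := hv
      rw [hp] at hpw; obtain rfl := Option.some_inj.mp hpw
      exact hwnc (Or.inl (Or.inr hu))
  · rcases hv with (hv | hv) | hv
    · exact hu.2.1 (C1_subset_C2 (Or.inr ⟨v, hv, hp⟩))
    · exact hu.2.1 (Or.inr ⟨v, hv, hp⟩)
    · exact hproper v u hp (hv.1.trans hu.1.symm)

end

/-- Three-step connection procedure on a properly 3-colored rooted forest `H`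
(given by a parent function `par` and coloring `col`): color-1 vertices
connect to their parents and both endpoints become connected; then
unconnected color-2 vertices with unconnected parents connect to their
parents; then likewise for color 3; finally all still-unconnected vertices
connect to their parents.  Every component of chosen edges has depth at
most 3: there is no directed path of three chosen edges. -/

theorem stmt_11 {V : Type*} (par : V → Option V) (col : V → Fin 3)
    (hproper : ∀ v u, par v = some u → col v ≠ col u) :
    ¬ ∃ v0 v1 v2 v3 : V,
        chosen par col v0 v1 ∧ chosen par col v1 v2 ∧ chosen par col v2 v3 := by
  rintro ⟨v0, v1, v2, v3, ⟨hp0, h0⟩, ⟨hp1, h1⟩, ⟨hp2, h2⟩⟩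
  rcases h1 with h1 | h1
  · -- v1 chooses in steps 1–3, so v2 ∈ C3
    have hv2c : v2 ∈ C3 par col := parent_mem_C3 h1 hp1
    rcases h2 with h2 | h2
    · exact lemB hproper h1 hp1 h2
    · exact h2.1 hv2c
  · -- v1 ∈ S4, so v1 ∉ C3
    have hv1n : v1 ∉ C3 par col := h1.1
    rcases h0 with h0 | h0
    · exact hv1n (parent_mem_C3 h0 hp0)
    · exact lemA hp0 h0.1 hv1n
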